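/- Positive semidefiniteness of Chebyshev-moment Toeplitz matrices: if σ is a nonnegative Borel measure on [−1,1] and x ∈ ℝ^N is defined by x_k = ∫_{−1}^1 T_{k−1}(t) dσ(t) for k ∈ [1:N], where T_j is the j-th Chebyshev polynomial of the first kind, then Toep_N(x) is positive semidefinite. -/

import Mathlib

open MeasureTheory

/-- The symmetric `N×N` Toeplitz matrix built from `x ∈ ℝ^N`, with `(i,j)` entry `x_{|i−j|}`
(0-based indexing). -/
def Toep {N : ℕ} (x : Fin N → ℝ) : Matrix (Fin N) (Fin N) ℝ :=
  Matrix.of fun i j => x ⟨((i : ℤ) - (j : ℤ)).natAbs, by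
    have hi := i.isLt; have hj := j.isLt; omega⟩

/-- Positive semidefiniteness of Chebyshev-moment Toeplitz matrices: for a nonnegative
Borel measure `σ` on `[−1,1]`, the Toeplitz matrix of the Chebyshev moments
`x_k = ∫ T_k dσ` (0-based) is positive semidefinite. -/
theorem stmt_14 {N : ℕ} (σ : Measure (Set.Icc (-1 : ℝ) 1)) [IsFiniteMeasure σ]
    (x : Fin N → ℝ)
    (hx : ∀ k : Fin N, x k = ∫ t : Set.Icc (-1 : ℝ) 1,
        (Polynomial.Chebyshev.T ℝ (k : ℤ)).eval (t : ℝ) ∂σ) :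
    (Toep x).PosSemidef := by
  set θ : Set.Icc (-1 : ℝ) 1 → ℝ := fun t => Real.arccos t.1 with hθ
  have hθc : Continuous θ := Real.continuous_arccos.comp continuous_subtype_val
  have hcos : ∀ t : Set.Icc (-1 : ℝ) 1, Real.cos (θ t) = t.1 := fun t =>
    Real.cos_arccos t.2.1 t.2.2
  have hentry : ∀ i j : Fin N, Toep x i j =
      ∫ t, (Real.cos (i * θ t) * Real.cos (j * θ t)
        + Real.sin (i * θ t) * Real.sin (j * θ t)) ∂σ := by
    intro i j
    rw [show Toep x i j = x ⟨((i : ℤ) - (j : ℤ)).natAbs, by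
      have hi := i.isLt; have hj := j.isLt; omega⟩ from rfl, hx]
    refine integral_congr_ae (Filter.Eventually.of_forall fun t => ?_)
    dsimp only
    have h1 : (t : ℝ) = Real.cos (θ t) := (hcos t).symm
    rw [h1, Polynomial.Chebyshev.T_real_cos]
    push_cast
    rcases abs_cases (((i : ℕ) : ℝ) - ((j : ℕ) : ℝ)) with ⟨h, _⟩ | ⟨h, _⟩
    · rw [h, sub_mul, Real.cos_sub]
    · rw [h, neg_mul, Real.cos_neg, sub_mul, Real.cos_sub]
  rw [Matrix.posSemidef_iff_dotProduct_mulVec]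
  constructor
  · ext i j
    simp only [Matrix.conjTranspose_apply, RCLike.star_def, starRingEnd_apply, star_trivial]
    show Toep x j i = Toep x i j
    simp only [Toep, Matrix.of_apply]
    congr 1
    exact Fin.ext (show ((j : ℤ) - (i : ℤ)).natAbs = ((i : ℤ) - (j : ℤ)).natAbs by omega)
  · intro v
    have hint : ∀ f : Set.Icc (-1 : ℝ) 1 → ℝ, Continuous f → Integrable f σ := fun f hf =>
      hf.integrable_of_hasCompactSupport (HasCompactSupport.of_compactSpace f)
    have hci : ∀ i : Fin N, Continuous fun t => Real.cos (i * θ t) :=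
      fun i => Real.continuous_cos.comp (continuous_const.mul hθc)
    have hsi : ∀ i : Fin N, Continuous fun t => Real.sin (i * θ t) :=
      fun i => Real.continuous_sin.comp (continuous_const.mul hθc)
    have hcont : ∀ i j : Fin N, Continuous fun t =>
        v i * Real.cos (i * θ t) * (v j * Real.cos (j * θ t))
          + v i * Real.sin (i * θ t) * (v j * Real.sin (j * θ t)) := fun i j =>
      (((continuous_const.mul (hci i)).mul (continuous_const.mul (hci j))).add
        ((continuous_const.mul (hsi i)).mul (continuous_const.mul (hsi j))))
    have key : (dotProduct (Star.star v) ((Toep x).mulVec v) : ℝ)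
        = ∫ t, ((∑ i, v i * Real.cos (i * θ t))^2
            + (∑ i, v i * Real.sin (i * θ t))^2) ∂σ := by
      have step1 : (dotProduct (Star.star v) ((Toep x).mulVec v) : ℝ)
          = ∑ i, ∑ j, ∫ t, (v i * Real.cos (i * θ t) * (v j * Real.cos (j * θ t))
              + v i * Real.sin (i * θ t) * (v j * Real.sin (j * θ t))) ∂σ := by
        simp only [dotProduct, Matrix.mulVec, dotProduct, star_trivial,
          Finset.mul_sum]
        refine Finset.sum_congr rfl fun i _ => Finset.sum_congr rfl fun j _ => ?_
        rw [hentry i j, mul_comm, mul_assoc, ← integral_mul_const]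
        refine integral_congr_ae (Filter.Eventually.of_forall fun t => ?_)
        dsimp only; ring
      rw [step1]
      have step2 : ∀ i : Fin N,
          (∑ j, ∫ t, (v i * Real.cos (i * θ t) * (v j * Real.cos (j * θ t))
              + v i * Real.sin (i * θ t) * (v j * Real.sin (j * θ t))) ∂σ)
          = ∫ t, ∑ j, (v i * Real.cos (i * θ t) * (v j * Real.cos (j * θ t))
              + v i * Real.sin (i * θ t) * (v j * Real.sin (j * θ t))) ∂σ := fun i =>
        (integral_finset_sum _ (fun j _ => hint _ (hcont i j))).symm
      rw [Finset.sum_congr rfl fun i _ => step2 i,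
        ← integral_finset_sum _ (fun i _ => hint _ (continuous_finset_sum _
          (fun j _ => hcont i j)))]
      refine integral_congr_ae (Filter.Eventually.of_forall fun t => ?_)
      dsimp only
      rw [sq, sq, Finset.sum_mul_sum, Finset.sum_mul_sum, ← Finset.sum_add_distrib]
      refine Finset.sum_congr rfl fun i _ => ?_
      rw [← Finset.sum_add_distrib]
    rw [key]
    exact integral_nonneg fun t => by positivity
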